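/- Let (X, δ) be a diversity and let φ be a non-expansive map from (T_X, δ_T) to a diversity (Y, δ_Y). If π = φ ∘ κ is an embedding of (X, δ) into (Y, δ_Y), then φ is an embedding of (T_X, δ_T) into (Y, δ_Y). -/

import Mathlib

open scoped Classical

noncomputable section

/-- A diversity: axioms (D1) and (D2). -/
def IsDiversity {X : Type*} (δ : Finset X → ℝ) : Prop :=
  (∀ A, 0 ≤ δ A) ∧ (∀ A, δ A = 0 ↔ A.card ≤ 1) ∧
    ∀ A B C : Finset X, B ≠ ∅ → δ (A ∪ C) ≤ δ (A ∪ B) + δ (B ∪ C)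

/-- Membership in `P_X`: `f ∅ = 0` and `Σ_{A ∈ 𝓐} f A ≥ δ (⋃ 𝓐)` for every finite
collection `𝓐` of finite subsets of `X`. -/
def MemP {X : Type*} (δ : Finset X → ℝ) (f : Finset X → ℝ) : Prop :=
  f ∅ = 0 ∧ ∀ 𝓐 : Finset (Finset X), δ (𝓐.sup id) ≤ ∑ A ∈ 𝓐, f A

/-- Membership in the tight span `T_X`: the pointwise-minimal elements of `P_X`. -/
def MemT {X : Type*} (δ : Finset X → ℝ) (f : Finset X → ℝ) : Prop :=
  MemP δ f ∧ ∀ g : Finset X → ℝ, MemP δ g → (∀ A, g A ≤ f A) → g = f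

/-- The function `δ_T` on finite subsets of the tight span: `δ_T ∅ = 0` and for nonempty `F`,
`δ_T F = sup { δ(⋃𝓐) - Σ_{A ∈ 𝓐} inf_{f ∈ F} f A : 𝓐 a finite collection of finite subsets }`. -/
noncomputable def deltaT {X : Type*} (δ : Finset X → ℝ) (F : Finset (Finset X → ℝ)) : ℝ :=
  if F = ∅ then 0
  else sSup {r : ℝ | ∃ 𝓐 : Finset (Finset X),
    r = δ (𝓐.sup id) - ∑ A ∈ 𝓐, sInf ((fun f => f A) '' (F : Set (Finset X → ℝ)))}

/-- The Kuratowski-type map `κ` sends `x` to the function `h_x : A ↦ δ (A ∪ {x})`. -/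
def hfun {X : Type*} (δ : Finset X → ℝ) (x : X) : Finset X → ℝ :=
  fun A => δ (A ∪ {x})

section Lemmas

variable {X : Type*} {δ : Finset X → ℝ}

lemma div_empty (hδ : IsDiversity δ) : δ ∅ = 0 := (hδ.2.1 ∅).mpr (by simp)

lemma div_singleton (hδ : IsDiversity δ) (x : X) : δ {x} = 0 :=
  (hδ.2.1 {x}).mpr (by simp)

lemma div_mono_insert (hδ : IsDiversity δ) (A : Finset X) (b : X) :
    δ A ≤ δ (insert b A) := by
  have h := hδ.2.2 A {b} ∅ (by simp)
  simp only [Finset.union_empty] at h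
  have e : A ∪ {b} = insert b A := by ext q; simp [or_comm]
  rw [e, div_singleton hδ] at h
  linarith

lemma div_mono_union (hδ : IsDiversity δ) (A B : Finset X) : δ A ≤ δ (A ∪ B) := by
  induction B using Finset.induction with
  | empty => simp
  | insert _ _ hb ih =>
    rw [Finset.union_insert]
    exact ih.trans (div_mono_insert hδ _ _)

lemma div_mono (hδ : IsDiversity δ) {A B : Finset X} (h : A ⊆ B) : δ A ≤ δ B := by
  have := div_mono_union hδ A B
  rwa [Finset.union_eq_right.mpr h] at this

/-- "Star" inequality: if each `E i` meets `C`, then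
`δ (C ∪ ⋃ E i) ≤ δ C + ∑ δ (E i)`. -/
lemma div_star (hδ : IsDiversity δ) {ι : Type*} (C : Finset X) (𝓐 : Finset ι)
    (E : ι → Finset X) (hE : ∀ i ∈ 𝓐, ((E i) ∩ C).Nonempty) :
    δ (C ∪ 𝓐.sup E) ≤ δ C + ∑ i ∈ 𝓐, δ (E i) := by
  induction 𝓐 using Finset.induction with
  | empty => simp
  | @insert i s hi ih =>
    obtain ⟨p, hp⟩ := hE i (Finset.mem_insert_self i s)
    rw [Finset.mem_inter] at hp
    have hEs : ∀ j ∈ s, ((E j) ∩ C).Nonempty := fun j hj =>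
      hE j (Finset.mem_insert_of_mem hj)
    have key : δ (C ∪ (insert i s).sup E) ≤ δ (C ∪ s.sup E) + δ (E i) := by
      have h2 := hδ.2.2 (C ∪ s.sup E) {p} (E i) (by simp)
      have e1 : (C ∪ s.sup E) ∪ {p} = C ∪ s.sup E := by
        apply Finset.union_eq_left.mpr
        intro q hq
        rw [Finset.mem_singleton] at hq
        subst hq
        exact Finset.mem_union_left _ hp.2
      have e2 : ({p} : Finset X) ∪ E i = E i := by
        apply Finset.union_eq_right.mpr
        intro q hq
        rw [Finset.mem_singleton] at hq
        subst hq
        exact hp.1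
      have e3 : C ∪ (insert i s).sup E = (C ∪ s.sup E) ∪ E i := by
        rw [Finset.sup_insert]
        change C ∪ (E i ∪ s.sup E) = _
        rw [Finset.union_assoc, Finset.union_comm (E i)]
      rw [e1, e2] at h2
      rw [e3]
      exact h2
    rw [Finset.sum_insert hi]
    have := ih hEs
    linarith

lemma memP_delta_le (hf : MemP δ f) (A : Finset X) : δ A ≤ f A := by
  have := hf.2 {A}
  simpa using this

lemma memP_nonneg (hδ : IsDiversity δ) (hf : MemP δ f) (A : Finset X) : 0 ≤ f A :=
  (hδ.1 A).trans (memP_delta_le hf A)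

lemma memP_hfun (hδ : IsDiversity δ) (x : X) : MemP δ (hfun δ x) := by
  constructor
  · show δ (∅ ∪ {x}) = 0
    rw [Finset.empty_union]; exact div_singleton hδ x
  · intro 𝓐
    have h1 : 𝓐.sup id ⊆ {x} ∪ 𝓐.sup (fun A => A ∪ {x}) := by
      intro u hu
      rw [Finset.mem_sup] at hu
      obtain ⟨B, hB, huB⟩ := hu
      apply Finset.mem_union_right
      rw [Finset.mem_sup]
      exact ⟨B, hB, Finset.mem_union_left _ huB⟩
    have h2 := div_star hδ ({x} : Finset X) 𝓐 (fun A => A ∪ {x})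
      (fun i _ => ⟨x, by simp⟩)
    have h3 := div_mono hδ h1
    rw [div_singleton hδ x] at h2
    calc δ (𝓐.sup id) ≤ δ ({x} ∪ 𝓐.sup (fun A => A ∪ {x})) := h3
      _ ≤ 0 + ∑ A ∈ 𝓐, δ (A ∪ {x}) := h2
      _ = ∑ A ∈ 𝓐, hfun δ x A := by rw [zero_add]; rfl

lemma memT_hfun (hδ : IsDiversity δ) (x : X) : MemT δ (hfun δ x) := by
  refine ⟨memP_hfun hδ x, fun g hg hle => ?_⟩
  have hgx : g {x} = 0 := by
    have h1 := hle {x}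
    have h2 : hfun δ x {x} = 0 := by
      show δ ({x} ∪ {x}) = 0
      rw [Finset.union_self]; exact div_singleton hδ x
    have h3 := memP_nonneg hδ hg {x}
    linarith
  funext A
  refine le_antisymm (hle A) ?_
  by_cases hA : A = {x}
  · subst hA
    rw [hgx]
    show δ ({x} ∪ {x}) ≤ 0
    rw [Finset.union_self, div_singleton hδ]
  · have h := hg.2 {A, {x}}
    have hsup : ({A, {x}} : Finset (Finset X)).sup id = A ∪ {x} := by
      simp [Finset.sup_insert]
    have hsum : ∑ B ∈ ({A, {x}} : Finset (Finset X)), g B = g A + g {x} := by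
      rw [Finset.sum_insert (by simpa using hA), Finset.sum_singleton]
    rw [hsup, hsum, hgx, add_zero] at h
    exact h

end Lemmas

noncomputable section Key

variable {X : Type*} {δ : Finset X → ℝ}

lemma sInf_attained {β : Type*} (F : Finset β) (hF : F.Nonempty) (e : β → ℝ) :
    ∃ f ∈ F, e f = sInf (e '' (F : Set β)) := by
  have hfin : (e '' (F : Set β)).Finite := (F.finite_toSet).image e
  have hne : (e '' (F : Set β)).Nonempty := by
    obtain ⟨f, hf⟩ := hF
    exact ⟨e f, Set.mem_image_of_mem e hf⟩
  obtain ⟨f, hf, hfe⟩ := hne.csInf_mem hfin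
  exact ⟨f, hf, hfe⟩

lemma sInf_le_of_mem' {β : Type*} (F : Finset β) (e : β → ℝ) {f : β} (hf : f ∈ F) :
    sInf (e '' (F : Set β)) ≤ e f := by
  have hfin : (e '' (F : Set β)).Finite := (F.finite_toSet).image e
  exact csInf_le hfin.bddBelow (Set.mem_image_of_mem e hf)

lemma keyL (hδ : IsDiversity δ) {f : Finset X → ℝ} (hf : MemP δ f) (A : Finset X)
    (𝓐 : Finset (Finset X)) :
    δ (𝓐.sup id) - ∑ B ∈ 𝓐, sInf ((fun g => g B) ''
      ((insert f (A.image (hfun δ)) : Finset (Finset X → ℝ)) : Set (Finset X → ℝ)))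
      ≤ f A := by
  set F' : Finset (Finset X → ℝ) := insert f (A.image (hfun δ)) with hF'
  set m : Finset X → ℝ := fun B => sInf ((fun g => g B) '' (F' : Set (Finset X → ℝ)))
    with hm
  show δ (𝓐.sup id) - ∑ B ∈ 𝓐, m B ≤ f A
  by_cases hA : A = ∅
  · subst hA
    have hFs : F' = {f} := by simp [hF']
    have hmB : ∀ B, m B = f B := by
      intro B
      rw [hm, hFs]
      simp
    have h := hf.2 𝓐
    have hsum : ∑ B ∈ 𝓐, m B = ∑ B ∈ 𝓐, f B := Finset.sum_congr rfl fun B _ => hmB B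
    rw [hsum]
    rw [hf.1]
    linarith
  · have hAne : A.Nonempty := Finset.nonempty_iff_ne_empty.mpr hA
    obtain ⟨a0, ha0⟩ := hAne
    have hwit : ∀ B : Finset X, ∃ x : X, x ∈ A ∧ (m B ≠ f B → m B = δ (B ∪ {x})) := by
      intro B
      obtain ⟨g, hg, hgB⟩ := sInf_attained F' ⟨f, Finset.mem_insert_self _ _⟩
        (fun g => g B)
      rcases Finset.mem_insert.mp hg with rfl | hg'
      · exact ⟨a0, ha0, fun h => absurd hgB.symm h⟩
      · obtain ⟨a, haA, rfl⟩ := Finset.mem_image.mp hg'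
        exact ⟨a, haA, fun _ => hgB.symm⟩
    choose a haA haval using hwit
    set 𝓐₁ := 𝓐.filter (fun B => m B = f B) with h𝓐₁
    set 𝓐₂ := 𝓐.filter (fun B => ¬ m B = f B) with h𝓐₂
    set C : Finset X := A ∪ 𝓐₁.sup id with hC
    set E : Finset X → Finset X := fun B => B ∪ {a B} with hE
    -- subset step
    have hsub : 𝓐.sup id ⊆ C ∪ 𝓐₂.sup E := by
      intro u hu
      rw [Finset.mem_sup] at hu
      obtain ⟨B, hB, huB⟩ := hu
      by_cases hB1 : m B = f B
      · apply Finset.mem_union_left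
        apply Finset.mem_union_right
        rw [Finset.mem_sup]
        exact ⟨B, Finset.mem_filter.mpr ⟨hB, hB1⟩, huB⟩
      · apply Finset.mem_union_right
        rw [Finset.mem_sup]
        exact ⟨B, Finset.mem_filter.mpr ⟨hB, hB1⟩, Finset.mem_union_left _ huB⟩
    have step1 : δ (𝓐.sup id) ≤ δ (C ∪ 𝓐₂.sup E) := div_mono hδ hsub
    -- star step
    have step2 : δ (C ∪ 𝓐₂.sup E) ≤ δ C + ∑ B ∈ 𝓐₂, δ (E B) := by
      apply div_star hδ
      intro B _
      exact ⟨a B, Finset.mem_inter.mpr ⟨Finset.mem_union_right _ (Finset.mem_singleton_self _),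
        Finset.mem_union_left _ (haA B)⟩⟩
    -- P_X step
    have step3 : δ C ≤ f A + ∑ B ∈ 𝓐₁, f B := by
      have h := hf.2 (insert A 𝓐₁)
      have hsupC : (insert A 𝓐₁).sup id = C := by
        rw [Finset.sup_insert]
        rfl
      rw [hsupC] at h
      by_cases hAm : A ∈ 𝓐₁
      · rw [Finset.insert_eq_self.mpr hAm] at h
        have hfA : 0 ≤ f A := memP_nonneg hδ hf A
        linarith
      · rw [Finset.sum_insert hAm] at h
        exact h
    -- sum bookkeeping
    have hsum1 : ∑ B ∈ 𝓐₁, m B = ∑ B ∈ 𝓐₁, f B :=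
      Finset.sum_congr rfl fun B hB => (Finset.mem_filter.mp hB).2
    have hsum2 : ∑ B ∈ 𝓐₂, m B = ∑ B ∈ 𝓐₂, δ (E B) :=
      Finset.sum_congr rfl fun B hB => haval B (Finset.mem_filter.mp hB).2
    have hsplit : ∑ B ∈ 𝓐₁, m B + ∑ B ∈ 𝓐₂, m B = ∑ B ∈ 𝓐, m B :=
      Finset.sum_filter_add_sum_filter_not 𝓐 _ m
    linarith

end Key

noncomputable section Key2

variable {X : Type*} {δ : Finset X → ℝ}

lemma deltaT_le (hδ : IsDiversity δ) {f : Finset X → ℝ} (hf : MemP δ f) (A : Finset X) :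
    deltaT δ (insert f (A.image (hfun δ))) ≤ f A := by
  rw [deltaT, if_neg (Finset.insert_ne_empty _ _)]
  apply Real.sSup_le
  · rintro r ⟨𝓐, rfl⟩
    exact keyL hδ hf A 𝓐
  · exact memP_nonneg hδ hf A

/-- Main upper bound: for nonempty `F ⊆ T_X`, each term in the sup defining `δ_T F`
is at most `δY (φ '' F)`. -/
lemma ub {Y : Type*} {δY : Finset Y → ℝ} (hδ : IsDiversity δ) (hδY : IsDiversity δY)
    (φ : (Finset X → ℝ) → Y)
    (hφ : ∀ F : Finset (Finset X → ℝ), (∀ f ∈ F, MemT δ f) →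
      δY (F.image φ) ≤ deltaT δ F)
    (hπ : ∀ A : Finset X, δY (A.image fun x => φ (hfun δ x)) = δ A)
    (F : Finset (Finset X → ℝ)) (hF : ∀ f ∈ F, MemT δ f) (hFne : F.Nonempty)
    (𝓐 : Finset (Finset X)) :
    δ (𝓐.sup id) - ∑ B ∈ 𝓐, sInf ((fun f => f B) '' (F : Set (Finset X → ℝ)))
      ≤ δY (F.image φ) := by
  set m : Finset X → ℝ := fun B => sInf ((fun f => f B) '' (F : Set (Finset X → ℝ)))
    with hm
  have hwit : ∀ B : Finset X, ∃ g, g ∈ F ∧ g B = m B := by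
    intro B
    obtain ⟨g, hg1, hg2⟩ := sInf_attained F hFne (fun g => g B)
    exact ⟨g, hg1, hg2⟩
  choose fB hfBmem hfBval using hwit
  set E : Finset X → Finset Y := fun B => (insert (fB B) (B.image (hfun δ))).image φ
    with hEdef
  have claim1 : ∀ B, δY (E B) ≤ m B := by
    intro B
    have h1 : δY (E B) ≤ deltaT δ (insert (fB B) (B.image (hfun δ))) := by
      apply hφ
      intro g hg
      rcases Finset.mem_insert.mp hg with rfl | hg'
      · exact hF _ (hfBmem B)
      · obtain ⟨x, _, rfl⟩ := Finset.mem_image.mp hg'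
        exact memT_hfun hδ x
    have h2 := deltaT_le hδ (hF _ (hfBmem B)).1 B
    rw [hfBval B] at h2
    exact h1.trans h2
  have claim2 : ((𝓐.sup id).image fun x => φ (hfun δ x)) ⊆ F.image φ ∪ 𝓐.sup E := by
    intro y hy
    obtain ⟨x, hx, rfl⟩ := Finset.mem_image.mp hy
    rw [Finset.mem_sup] at hx
    obtain ⟨B, hB, hxB⟩ := hx
    apply Finset.mem_union_right
    rw [Finset.mem_sup]
    refine ⟨B, hB, ?_⟩
    rw [hEdef]
    exact Finset.mem_image.mpr ⟨hfun δ x,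
      Finset.mem_insert_of_mem (Finset.mem_image_of_mem _ hxB), rfl⟩
  have hstar : δY (F.image φ ∪ 𝓐.sup E) ≤ δY (F.image φ) + ∑ B ∈ 𝓐, δY (E B) := by
    apply div_star hδY
    intro B _
    refine ⟨φ (fB B), Finset.mem_inter.mpr ⟨?_, Finset.mem_image_of_mem φ (hfBmem B)⟩⟩
    rw [hEdef]
    exact Finset.mem_image_of_mem φ (Finset.mem_insert_self _ _)
  have hchain : δ (𝓐.sup id) ≤ δY (F.image φ) + ∑ B ∈ 𝓐, δY (E B) := by
    calc δ (𝓐.sup id) = δY ((𝓐.sup id).image fun x => φ (hfun δ x)) := (hπ _).symm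
      _ ≤ δY (F.image φ ∪ 𝓐.sup E) := div_mono hδY claim2
      _ ≤ δY (F.image φ) + ∑ B ∈ 𝓐, δY (E B) := hstar
  have hsum : ∑ B ∈ 𝓐, δY (E B) ≤ ∑ B ∈ 𝓐, m B :=
    Finset.sum_le_sum fun B _ => claim1 B
  linarith

end Key2

/-- if `φ` is non-expansive from `(T_X, δ_T)` to a diversity `(Y, δY)` and
`π = φ ∘ κ` is an embedding of `(X, δ)` into `(Y, δY)`, then `φ` is an embedding of
`(T_X, δ_T)` into `(Y, δY)`. -/
theorem nonexpansive_on_tightSpan_embedding {X Y : Type*}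
    (δ : Finset X → ℝ) (δY : Finset Y → ℝ)
    (hδ : IsDiversity δ) (hδY : IsDiversity δY)
    (φ : (Finset X → ℝ) → Y)
    (hφ : ∀ F : Finset (Finset X → ℝ), (∀ f ∈ F, MemT δ f) →
      δY (F.image φ) ≤ deltaT δ F)
    (hπinj : Function.Injective fun x : X => φ (hfun δ x))
    (hπ : ∀ A : Finset X, δY (A.image fun x => φ (hfun δ x)) = δ A) :
    (∀ f g : Finset X → ℝ, MemT δ f → MemT δ g → φ f = φ g → f = g) ∧
    (∀ F : Finset (Finset X → ℝ), (∀ f ∈ F, MemT δ f) →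
      δY (F.image φ) = deltaT δ F) := by

  have part2 : ∀ F : Finset (Finset X → ℝ), (∀ f ∈ F, MemT δ f) →
      δY (F.image φ) = deltaT δ F := by
    intro F hF
    by_cases hFe : F = ∅
    · subst hFe
      rw [deltaT, if_pos rfl, Finset.image_empty]
      exact (hδY.2.1 ∅).mpr (by simp)
    · refine le_antisymm (hφ F hF) ?_
      rw [deltaT, if_neg hFe]
      apply Real.sSup_le
      · rintro r ⟨𝓐, rfl⟩
        exact ub hδ hδY φ hφ hπ F hF (Finset.nonempty_iff_ne_empty.mpr hFe) 𝓐
      · exact hδY.1 _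
  refine ⟨?_, part2⟩
  intro f g hf hg heq
  set m : Finset X → ℝ := fun B => min (f B) (g B) with hm
  have hinf : ∀ B : Finset X,
      sInf ((fun h => h B) '' (((insert f ({g} : Finset (Finset X → ℝ))) :
        Finset (Finset X → ℝ)) : Set (Finset X → ℝ))) = m B := by
    intro B
    rw [Finset.coe_insert, Finset.coe_singleton, Set.image_insert_eq,
      Set.image_singleton, csInf_pair]
  have himg : (insert f ({g} : Finset (Finset X → ℝ))).image φ = {φ f} := by
    rw [Finset.image_insert, Finset.image_singleton, heq]
    exact Finset.insert_eq_self.mpr (Finset.mem_singleton_self _)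
  have hδY0 : δY ({φ f} : Finset Y) = 0 := (hδY.2.1 _).mpr (by simp)
  have hmemP : MemP δ m := by
    constructor
    · rw [hm]
      show min (f ∅) (g ∅) = 0
      rw [hf.1.1, hg.1.1, min_self]
    · intro 𝓐
      have h := ub hδ hδY φ hφ hπ (insert f {g})
        (by
          intro h' hh'
          rcases Finset.mem_insert.mp hh' with rfl | hh''
          · exact hf
          · rw [Finset.mem_singleton.mp hh'']
            exact hg)
        (Finset.insert_nonempty _ _) 𝓐
      rw [himg, hδY0] at h
      have hs : ∑ B ∈ 𝓐, sInf ((fun h => h B) ''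
          (((insert f ({g} : Finset (Finset X → ℝ))) :
            Finset (Finset X → ℝ)) : Set (Finset X → ℝ)))
          = ∑ B ∈ 𝓐, m B := Finset.sum_congr rfl fun B _ => hinf B
      rw [hs] at h
      linarith
  have heqf : m = f := hf.2 m hmemP fun B => min_le_left _ _
  have heqg : m = g := hg.2 m hmemP fun B => min_le_right _ _
  exact heqf.symm.trans heqg

end
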